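/- Let (Ω, F, P) be a probability space, let d ≥ 1 and m ≥ 0 be integers, and let X_0, X_1, …, X_m : Ω → ℝ^d be square-integrable random vectors. Let J : Ω → ℕ be a random variable, independent of (X_0, …, X_m), with P(J = j) = 2^{−j} for every integer j ≥ 1. Define the multilevel Monte Carlo estimator G := X_0 + 2^J·(X_J − X_{J−1}) on the event {1 ≤ J ≤ m}, and G := X_0 on the event {J > m}. Then E[‖G − X_0‖²] = Σ_{j=1}^m 2^j · E[‖X_j − X_{j−1}‖²]. -/

import Mathlib

open MeasureTheory ProbabilityTheory

theorem mlmc_second_moment {Ω : Type*} [MeasurableSpace Ω] (P : Measure Ω)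
    [IsProbabilityMeasure P] (d m : ℕ) (hd : 1 ≤ d)
    (X : ℕ → Ω → EuclideanSpace ℝ (Fin d))
    (hXmeas : ∀ j, Measurable (X j))
    (hXsq : ∀ j ≤ m, MemLp (X j) 2 P)
    (J : Ω → ℕ) (hJmeas : Measurable J)
    (hindep : IndepFun J (fun ω (i : Fin (m + 1)) => X i ω) P)
    (hJlaw : ∀ j : ℕ, 1 ≤ j → P {ω | J ω = j} = (1 / 2 : ENNReal) ^ j) :
    ∫ ω, ‖(if 1 ≤ J ω ∧ J ω ≤ m then
          X 0 ω + ((2 : ℝ) ^ J ω) • (X (J ω) ω - X (J ω - 1) ω)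
        else X 0 ω) - X 0 ω‖ ^ 2 ∂P =
      ∑ j ∈ Finset.Icc 1 m, (2 : ℝ) ^ j * ∫ ω, ‖X j ω - X (j - 1) ω‖ ^ 2 ∂P := by
  classical
  -- integrability of the squared norms
  have hint : ∀ j ∈ Finset.Icc 1 m,
      Integrable (fun ω => ‖X j ω - X (j - 1) ω‖ ^ 2) P := by
    intro j hj
    simp only [Finset.mem_Icc] at hj
    have h1 : MemLp (fun ω => X j ω - X (j - 1) ω) 2 P :=
      (hXsq j hj.2).sub (hXsq (j - 1) (le_trans (Nat.sub_le _ _) hj.2))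
    have h2 := h1.integrable_norm_rpow (by norm_num) (by norm_num)
    have h3 : (2 : ENNReal).toReal = ((2 : ℕ) : ℝ) := by norm_num
    rw [h3] at h2
    simpa [Real.rpow_natCast] using h2
  -- pointwise identity
  have key : ∀ ω, ‖(if 1 ≤ J ω ∧ J ω ≤ m then
          X 0 ω + ((2 : ℝ) ^ J ω) • (X (J ω) ω - X (J ω - 1) ω)
        else X 0 ω) - X 0 ω‖ ^ 2 =
      ∑ j ∈ Finset.Icc 1 m, Set.indicator {ω' | J ω' = j}
        (fun ω' => (4 : ℝ) ^ j * ‖X j ω' - X (j - 1) ω'‖ ^ 2) ω := by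
    intro ω
    by_cases h : 1 ≤ J ω ∧ J ω ≤ m
    · rw [if_pos h]
      rw [Finset.sum_eq_single_of_mem (J ω) (Finset.mem_Icc.mpr h)]
      · have : Set.indicator {ω' | J ω' = J ω}
            (fun ω' => (4 : ℝ) ^ J ω * ‖X (J ω) ω' - X (J ω - 1) ω'‖ ^ 2) ω
            = (4 : ℝ) ^ J ω * ‖X (J ω) ω - X (J ω - 1) ω‖ ^ 2 :=
          Set.indicator_of_mem (show ω ∈ {ω' | J ω' = J ω} from rfl) _
        rw [this, add_sub_cancel_left, norm_smul]
        rw [mul_pow]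
        congr 1
        rw [Real.norm_eq_abs, abs_of_nonneg (by positivity), ← pow_mul, mul_comm, pow_mul]
        norm_num
      · intro b _ hb
        exact Set.indicator_of_notMem (show ω ∉ {ω' | J ω' = b} from fun hh => hb hh.symm) _
    · rw [if_neg h]
      rw [sub_self, norm_zero]
      rw [Finset.sum_eq_zero]
      · norm_num
      intro j hj
      simp only [Finset.mem_Icc] at hj
      apply Set.indicator_of_notMem
      intro hh
      simp only [Set.mem_setOf_eq] at hh
      exact h ⟨hh ▸ hj.1, hh ▸ hj.2⟩
  simp only [key]
  rw [integral_finset_sum]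
  · apply Finset.sum_congr rfl
    intro j hj
    have hjm : j ≤ m := (Finset.mem_Icc.mp hj).2
    have hj1 : 1 ≤ j := (Finset.mem_Icc.mp hj).1
    set jf : Fin (m + 1) := ⟨j, by omega⟩
    set jf' : Fin (m + 1) := ⟨j - 1, by omega⟩
    set φ : ℕ → ℝ := fun n => if n = j then 1 else 0 with hφdef
    set ψ : (Fin (m + 1) → EuclideanSpace ℝ (Fin d)) → ℝ :=
      fun v => (4 : ℝ) ^ j * ‖v jf - v jf'‖ ^ 2 with hψdef
    have hφmeas : Measurable φ := by measurability
    have hψmeas : Measurable ψ := by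
      apply Measurable.const_mul
      exact ((measurable_pi_apply jf).sub (measurable_pi_apply jf')).norm.pow_const 2
    have hvecmeas : Measurable (fun ω (i : Fin (m + 1)) => X i ω) :=
      measurable_pi_lambda _ (fun i => hXmeas i)
    have hcomp : IndepFun (φ ∘ J) (ψ ∘ (fun ω (i : Fin (m + 1)) => X i ω)) P :=
      hindep.comp hφmeas hψmeas
    have heq : (fun ω => Set.indicator {ω' | J ω' = j}
        (fun ω' => (4 : ℝ) ^ j * ‖X j ω' - X (j - 1) ω'‖ ^ 2) ω)
        = (φ ∘ J) * (ψ ∘ (fun ω (i : Fin (m + 1)) => X i ω)) := by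
      funext ω
      simp only [Pi.mul_apply, Function.comp_apply, hφdef, hψdef]
      by_cases hh : J ω = j
      · rw [Set.indicator_of_mem (show ω ∈ {ω' | J ω' = j} from hh), if_pos hh]
        simp [jf, jf']
      · rw [Set.indicator_of_notMem (show ω ∉ {ω' | J ω' = j} from hh), if_neg hh]
        ring
    rw [heq, hcomp.integral_mul_eq_mul_integral ((hφmeas.comp hJmeas).aestronglyMeasurable)
      ((hψmeas.comp hvecmeas).aestronglyMeasurable)]
    have hφint : ∫ ω, (φ ∘ J) ω ∂P = ((1 : ℝ) / 2) ^ j := by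
      have : (φ ∘ J) = Set.indicator {ω | J ω = j} (fun _ => (1 : ℝ)) := by
        funext ω
        by_cases hh : J ω = j
        · rw [Set.indicator_of_mem (show ω ∈ {ω | J ω = j} from hh)]; simp [hφdef, hh]
        · rw [Set.indicator_of_notMem (show ω ∉ {ω | J ω = j} from hh)]; simp [hφdef, hh]
      rw [this, integral_indicator_const (1 : ℝ) (show MeasurableSet {ω | J ω = j} from hJmeas (measurableSet_singleton j))]
      rw [Measure.real, hJlaw j hj1]
      simp [ENNReal.toReal_pow]
    have hψint : ∫ ω, (ψ ∘ (fun ω (i : Fin (m + 1)) => X i ω)) ω ∂P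
        = (4 : ℝ) ^ j * ∫ ω, ‖X j ω - X (j - 1) ω‖ ^ 2 ∂P := by
      simp only [Function.comp_apply, hψdef]
      rw [integral_const_mul]
    rw [hφint, hψint, ← mul_assoc, ← mul_pow]
    norm_num
  · intro j hj
    exact ((hint j hj).const_mul _).indicator (show MeasurableSet {ω' | J ω' = j} from hJmeas (measurableSet_singleton j))
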